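/- For all natural numbers m, i, j with 2i ≤ m and j ≤ m−2i, the following identity of rising factorials holds: (−m+2i)_j · (m−2i+1)_j = (−m)_j · (m+1)_j · ( (m−j)^{\underline{2i}} / (m+j)^{\underline{2i}} ), where (a)_j = a(a+1)⋯(a+j−1) is the rising factorial with (a)_0 = 1, and x^{\underline{m}} = x(x−1)⋯(x−m+1) is the falling factorial with x^{\underline{0}} = 1 (all quantities interpreted as rational numbers; the denominator (m+j)^{\underline{2i}} is nonzero since j ≤ m−2i implies every factor is at least 1). -/

import Mathlib

open Nat



/-- Rising factorial (Pochhammer symbol) of a rational number: `(a)_j = a (a+1) ⋯ (a+j-1)`. -/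
def risingFactorial (a : ℚ) (j : ℕ) : ℚ := ∏ i ∈ Finset.range j, (a + i)

/-- Falling factorial of a rational number: `x^{(m)} = x (x-1) ⋯ (x-m+1)`. -/
def fallingFactorial (x : ℚ) (m : ℕ) : ℚ := ∏ i ∈ Finset.range m, (x - i)

lemma rf_succ (a : ℚ) (j : ℕ) : risingFactorial a (j+1) = risingFactorial a j * (a + j) := by
  simp [risingFactorial, Finset.prod_range_succ]

lemma ff_succ (x : ℚ) (k : ℕ) : fallingFactorial x (k+1) = fallingFactorial x k * (x - k) := by
  simp [fallingFactorial, Finset.prod_range_succ]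

lemma rf_pos (n j : ℕ) : risingFactorial ((n:ℚ)+1) j = (n+j) ! / n ! := by
  induction j with
  | zero => simp [risingFactorial, div_self (Nat.cast_ne_zero.mpr (Nat.factorial_ne_zero _) : ((_ : ℕ) ! : ℚ) ≠ 0)]
  | succ j ih =>
    rw [rf_succ, ih]
    have : (n + (j+1)) ! = (n + j) ! * ((n:ℚ) + 1 + j) := by
      push_cast [show n + (j+1) = (n+j) + 1 by ring, Nat.factorial_succ]
      ring
    rw [div_mul_eq_mul_div, ← this]

lemma rf_neg (n j : ℕ) (h : j ≤ n) : risingFactorial (-(n:ℚ)) j = (-1)^j * ((n) ! / (n-j) !) := by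
  induction j with
  | zero => simp [risingFactorial, div_self (Nat.cast_ne_zero.mpr (Nat.factorial_ne_zero _) : ((_ : ℕ) ! : ℚ) ≠ 0)]
  | succ j ih =>
    have hj : j ≤ n := Nat.le_of_succ_le h
    rw [rf_succ, ih hj]
    have h1 : (-(n:ℚ) + j) = -((n - j : ℕ) : ℚ) := by
      push_cast [Nat.cast_sub hj]; ring
    have h2 : (n - j) ! = (n - (j+1)) ! * ((n:ℚ) - j) := by
      have : n - j = (n - (j+1)) + 1 := by omega
      rw [this, Nat.factorial_succ]
      push_cast [Nat.cast_sub hj]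
      have : ((n - (j+1) : ℕ) : ℚ) = (n:ℚ) - (j+1) := by
        push_cast [Nat.cast_sub h]; ring
      rw [this]; ring
    rw [h1]
    have hne : ((n - (j+1)) ! : ℚ) ≠ 0 := Nat.cast_ne_zero.mpr (Nat.factorial_ne_zero _)
    have hne2 : ((n - j) ! : ℚ) ≠ 0 := Nat.cast_ne_zero.mpr (Nat.factorial_ne_zero _)
    field_simp
    rw [h2]
    push_cast [Nat.cast_sub hj]; ring

lemma ff_eq (n k : ℕ) (h : k ≤ n) : fallingFactorial (n:ℚ) k = (n) ! / (n-k) ! := by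
  induction k with
  | zero => simp [fallingFactorial, div_self (Nat.cast_ne_zero.mpr (Nat.factorial_ne_zero _) : ((_ : ℕ) ! : ℚ) ≠ 0)]
  | succ k ih =>
    have hk : k ≤ n := Nat.le_of_succ_le h
    rw [ff_succ, ih hk]
    have h2 : (n - k) ! = (n - (k+1)) ! * ((n:ℚ) - k) := by
      have : n - k = (n - (k+1)) + 1 := by omega
      rw [this, Nat.factorial_succ]
      have : ((n - (k+1) : ℕ) : ℚ) = (n:ℚ) - (k+1) := by
        push_cast [Nat.cast_sub h]; ring
      push_cast
      rw [this]; ring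
    have hne : ((n - (k+1)) ! : ℚ) ≠ 0 := Nat.cast_ne_zero.mpr (Nat.factorial_ne_zero _)
    have hne2 : ((n - k) ! : ℚ) ≠ 0 := Nat.cast_ne_zero.mpr (Nat.factorial_ne_zero _)
    field_simp
    rw [h2]
    ring

theorem risingFactorial_shift_identity (m i j : ℕ) (hi : 2 * i ≤ m) (hj : j ≤ m - 2 * i) :
    risingFactorial (-(m : ℚ) + 2 * i) j * risingFactorial ((m : ℚ) - 2 * i + 1) j =
      risingFactorial (-(m : ℚ)) j * risingFactorial ((m : ℚ) + 1) j *
        (fallingFactorial ((m : ℚ) - j) (2 * i) / fallingFactorial ((m : ℚ) + j) (2 * i)) := by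
  set k := 2 * i with hk
  have hjm : j ≤ m := by omega
  have e1 : -(m : ℚ) + 2 * i = -((m - k : ℕ) : ℚ) := by rw [hk, Nat.cast_sub hi, Nat.cast_mul]; push_cast; ring
  have e2 : (m : ℚ) - 2 * i + 1 = ((m - k : ℕ) : ℚ) + 1 := by rw [hk, Nat.cast_sub hi, Nat.cast_mul]; push_cast; ring
  have e3 : (m : ℚ) - j = ((m - j : ℕ) : ℚ) := by push_cast [Nat.cast_sub hjm]; ring
  have e4 : (m : ℚ) + j = ((m + j : ℕ) : ℚ) := by push_cast; ring
  rw [e1, e2, e3, e4,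
    rf_neg (m - k) j hj, rf_pos (m - k) j, rf_neg m j hjm, rf_pos m j,
    ff_eq (m - j) k (by omega), ff_eq (m + j) k (by omega)]
  have i1 : m - k + j = m + j - k := by omega
  have i2 : m - k - j = m - j - k := by omega
  have i3 : m + j - k ≥ 0 := by omega
  rw [i1, i2]
  have n1 : ((m - j - k) ! : ℚ) ≠ 0 := Nat.cast_ne_zero.mpr (Nat.factorial_ne_zero _)
  have n2 : ((m + j - k) ! : ℚ) ≠ 0 := Nat.cast_ne_zero.mpr (Nat.factorial_ne_zero _)
  have n3 : ((m - k) ! : ℚ) ≠ 0 := Nat.cast_ne_zero.mpr (Nat.factorial_ne_zero _)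
  have n4 : ((m - j) ! : ℚ) ≠ 0 := Nat.cast_ne_zero.mpr (Nat.factorial_ne_zero _)
  have n5 : ((m + j) ! : ℚ) ≠ 0 := Nat.cast_ne_zero.mpr (Nat.factorial_ne_zero _)
  have n6 : ((m) ! : ℚ) ≠ 0 := Nat.cast_ne_zero.mpr (Nat.factorial_ne_zero _)
  field_simp
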